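/- Let S be a numerical semigroup of depth q ≥ 8 with |L| ≤ 12 (L = S ∩ [0,c)). Then, with h = ⌈q/2⌉ and α_i the cardinalities of the Apéry pieces A_i, one has α_i = 0 for all 1 ≤ i ≤ h−1. -/
import Mathlib


theorem stmt17 (S : Set ℕ)
    (h0 : 0 ∈ S)
    (hadd : ∀ a ∈ S, ∀ b ∈ S, a + b ∈ S)
    (hfin : (Sᶜ : Set ℕ).Finite)
    (m : ℕ) (hm : m ∈ S ∧ m ≠ 0 ∧ ∀ x ∈ S, x ≠ 0 → m ≤ x)
    (c : ℕ) (hc : (∀ x, c ≤ x → x ∈ S) ∧ ∀ c', (∀ x, c' ≤ x → x ∈ S) → c ≤ c')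
    (q ρ : ℕ) (hq : q = (c + m - 1) / m) (hρ : ρ = q * m - c)
    (L : Set ℕ) (hL : L = {x ∈ S | x < c})
    (A : Set ℕ) (hA : A = {x ∈ S | ¬ ∃ s ∈ S, x = m + s})
    (Ai : ℕ → Set ℕ)
    (hAi : ∀ i, Ai i = {x ∈ A | i * m ≤ x + ρ ∧ x + ρ < (i + 1) * m})
    (hq8 : 8 ≤ q) (hL12 : L.ncard ≤ 12)
    (h : ℕ) (hh : h = (q + 1) / 2) :
    ∀ i, 1 ≤ i → i ≤ h - 1 → (Ai i).ncard = 0 := by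
  intro i hi1 hih
  have hm0 : 0 < m := Nat.pos_of_ne_zero hm.2.1
  -- multiples of m are in S
  have hmul : ∀ k : ℕ, k * m ∈ S := by
    intro k
    induction k with
    | zero => simpa using h0
    | succ n ih =>
      have := hadd _ ih _ hm.1
      simpa [Nat.succ_mul] using this
  -- basic facts about q, ρ
  have hq1 : q * m ≤ c + m - 1 := by
    rw [hq]; exact Nat.div_mul_le_self _ _
  have hq2 : c + m - 1 < (q + 1) * m := by
    have h1 : (c + m - 1) / m < q + 1 := by rw [hq]; exact Nat.lt_succ_self _
    exact (Nat.div_lt_iff_lt_mul hm0).mp h1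
  have hq2' : c + m - 1 < q * m + m := by
    have : (q + 1) * m = q * m + m := by ring
    omega
  have hcq : c ≤ q * m := by omega
  have hρc : ρ + c = q * m := by omega
  have hρm : ρ < m := by omega
  -- suppose Ai i is nonempty
  have hempty : Ai i = ∅ := by
    rw [hAi]
    ext x
    simp only [Set.mem_setOf_eq, Set.mem_empty_iff_false, iff_false]
    rintro ⟨hxA, hx1, hx2⟩
    rw [hA] at hxA
    obtain ⟨hxS, hxnot⟩ := hxA
    have him : m ≤ i * m := by
      calc m = 1 * m := (one_mul m).symm
      _ ≤ i * m := Nat.mul_le_mul_right m hi1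
    have hxpos : 0 < x := by omega
    have hxmod : ¬ (∃ j, x = j * m) := by
      rintro ⟨j, hj⟩
      have hjpos : 1 ≤ j := by
        by_contra h'
        have hj0 : j = 0 := by omega
        rw [hj0] at hj
        simp at hj
        omega
      apply hxnot
      refine ⟨(j - 1) * m, hmul _, ?_⟩
      have hje : (j - 1 + 1) = j := by omega
      calc x = j * m := hj
      _ = (j - 1 + 1) * m := by rw [hje]
      _ = m + (j - 1) * m := by ring
    have hiq : i + 1 ≤ q := by omega
    -- the two finsets
    set T1 : Finset ℕ := (Finset.range q).image (· * m) with hT1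
    set T2 : Finset ℕ := (Finset.range (q - i)).image (fun k => x + k * m) with hT2
    have hT1card : T1.card = q := by
      rw [hT1, Finset.card_image_of_injective _ (mul_left_injective₀ hm.2.1),
        Finset.card_range]
    have hT2card : T2.card = q - i := by
      rw [hT2, Finset.card_image_of_injective, Finset.card_range]
      intro a b hab
      exact mul_left_injective₀ hm.2.1 (Nat.add_left_cancel hab)
    have hdisj : Disjoint T1 T2 := by
      rw [Finset.disjoint_left]
      intro y hy1 hy2
      rw [hT1, Finset.mem_image] at hy1
      rw [hT2, Finset.mem_image] at hy2
      obtain ⟨k, _, rfl⟩ := hy1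
      obtain ⟨l, _, hl⟩ := hy2
      have hlk : l < k := by
        have : l * m < k * m := by omega
        exact Nat.lt_of_mul_lt_mul_right this
      apply hxmod
      refine ⟨k - l, ?_⟩
      have : (k - l) * m = k * m - l * m := by
        rw [Nat.sub_mul]
      omega
    have hsub : ↑(T1 ∪ T2) ⊆ L := by
      intro y hy
      rw [Finset.coe_union, Set.mem_union] at hy
      rw [hL]
      rcases hy with hy | hy
      · rw [hT1] at hy
        simp only [Finset.coe_image, Finset.coe_range, Set.mem_image, Set.mem_Iio] at hy
        obtain ⟨k, hk, rfl⟩ := hy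
        refine ⟨hmul k, ?_⟩
        have hk' : k * m ≤ (q - 1) * m := Nat.mul_le_mul_right m (by omega)
        have hqm : (q - 1) * m + m = q * m := by
          have : (q - 1 + 1) = q := by omega
          calc (q - 1) * m + m = (q - 1 + 1) * m := by ring
          _ = q * m := by rw [this]
        omega
      · rw [hT2] at hy
        simp only [Finset.coe_image, Finset.coe_range, Set.mem_image, Set.mem_Iio] at hy
        obtain ⟨k, hk, rfl⟩ := hy
        refine ⟨hadd _ hxS _ (hmul k), ?_⟩
        have h1 : (i + 1 + k) * m ≤ q * m := Nat.mul_le_mul_right m (by omega)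
        have h2 : (i + 1 + k) * m = (i + 1) * m + k * m := by ring
        omega
    have hLfin : L.Finite := by
      apply Set.Finite.subset (Set.finite_Iio c)
      rw [hL]; intro z hz; exact hz.2
    have hcard : (T1 ∪ T2).card ≤ L.ncard := by
      rw [← Set.ncard_coe_finset]
      exact Set.ncard_le_ncard hsub hLfin
    rw [Finset.card_union_of_disjoint hdisj, hT1card, hT2card] at hcard
    omega
  rw [hempty, Set.ncard_empty]
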